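/- Let ℓ₁, ℓ₂ > 0 with ℓ₁ ≠ ℓ₂, let b₁, b₂ > 0 and q₁, q₂ ∈ ℝ, and set Bⱼ = D(bⱼ)·S(qⱼ). If the function w ↦ (b₂² − b₁²)·sin(ℓ₁w)·sin(ℓ₂w) + (1/w)·(b₁²q₂·sin(ℓ₁w)·cos(ℓ₂w) − b₂²q₁·cos(ℓ₁w)·sin(ℓ₂w)) vanishes identically for w > 0, then b₁ = b₂ and q₁ = q₂ = 0. -/

import Mathlib

open Real

private lemma hd_lin (c w : ℝ) : HasDerivAt (fun x : ℝ => c * x) c w := by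
  simpa using (hasDerivAt_id w).const_mul c

private lemma hd_sin (c μ w : ℝ) :
    HasDerivAt (fun x => c * Real.sin (μ * x)) (c * μ * Real.cos (μ * w)) w := by
  have h2 : HasDerivAt (fun x => Real.sin (μ * x)) (Real.cos (μ * w) * μ) w :=
    (Real.hasDerivAt_sin (μ * w)).comp w (hd_lin μ w)
  have h3 := h2.const_mul c
  exact h3.congr_deriv (by ring)

private lemma hd_cos (c μ w : ℝ) :
    HasDerivAt (fun x => c * Real.cos (μ * x)) (-(c * μ) * Real.sin (μ * w)) w := by
  have h2 : HasDerivAt (fun x => Real.cos (μ * x)) (-Real.sin (μ * w) * μ) w :=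
    (Real.hasDerivAt_cos (μ * w)).comp w (hd_lin μ w)
  have h3 := h2.const_mul c
  exact h3.congr_deriv (by ring)

private lemma hd_wsin (c μ w : ℝ) :
    HasDerivAt (fun x => c * x * Real.sin (μ * x))
      (c * Real.sin (μ * w) + c * μ * w * Real.cos (μ * w)) w := by
  have h2 : HasDerivAt (fun x => Real.sin (μ * x)) (Real.cos (μ * w) * μ) w :=
    (Real.hasDerivAt_sin (μ * w)).comp w (hd_lin μ w)
  have h3 := (hd_lin c w).mul h2
  exact h3.congr_deriv (by ring)

private lemma hd_wcos (c μ w : ℝ) :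
    HasDerivAt (fun x => c * x * Real.cos (μ * x))
      (c * Real.cos (μ * w) - c * μ * w * Real.sin (μ * w)) w := by
  have h2 : HasDerivAt (fun x => Real.cos (μ * x)) (-Real.sin (μ * w) * μ) w :=
    (Real.hasDerivAt_cos (μ * w)).comp w (hd_lin μ w)
  have h3 := (hd_lin c w).mul h2
  exact h3.congr_deriv (by ring)

private lemma deriv_zero_of_zero {f g : ℝ → ℝ} (hd : ∀ w, HasDerivAt f (g w) w)
    (hf : ∀ x, f x = 0) : ∀ w, g w = 0 := by
  intro w
  have h0 : HasDerivAt f 0 w := by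
    have hfe : f = fun _ => 0 := funext hf
    rw [hfe]; exact hasDerivAt_const w 0
  exact (hd w).unique h0

private lemma cascade (A P Q s d : ℝ) (hs : 0 < s) (hd : d ≠ 0) (hsd : 0 < s ^ 2 - d ^ 2)
    (hG : ∀ x : ℝ, A * x * Real.cos (d * x) - A * x * Real.cos (s * x)
      + (P * Real.sin (s * x) + Q * Real.sin (d * x)) = 0) :
    A = 0 ∧ P = 0 ∧ Q = 0 := by
  -- level 0 -> 1
  have hder0 : ∀ w : ℝ, HasDerivAt
      (fun x => A * x * Real.cos (d * x) - A * x * Real.cos (s * x)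
        + (P * Real.sin (s * x) + Q * Real.sin (d * x)))
      (A * Real.cos (d*w) + (-(A*d)) * w * Real.sin (d*w)
        + (-A) * Real.cos (s*w) + (A*s) * w * Real.sin (s*w)
        + (P*s) * Real.cos (s*w) + (Q*d) * Real.cos (d*w)) w := by
    intro w
    have H := ((hd_wcos A d w).sub (hd_wcos A s w)).add ((hd_sin P s w).add (hd_sin Q d w))
    exact H.congr_deriv (by ring)
  have h1 := deriv_zero_of_zero hder0 hG
  -- level 1 -> 2
  have hder1 : ∀ w : ℝ, HasDerivAt
      (fun x => A * Real.cos (d*x) + (-(A*d)) * x * Real.sin (d*x)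
        + (-A) * Real.cos (s*x) + (A*s) * x * Real.sin (s*x)
        + (P*s) * Real.cos (s*x) + (Q*d) * Real.cos (d*x))
      ((-(2*A*d) - Q*d^2) * Real.sin (d*w) + (-(A*d^2)) * w * Real.cos (d*w)
        + (2*A*s - P*s^2) * Real.sin (s*w) + (A*s^2) * w * Real.cos (s*w)) w := by
    intro w
    have H := (((((hd_cos A d w).add (hd_wsin (-(A*d)) d w)).add
      (hd_cos (-A) s w)).add (hd_wsin (A*s) s w)).add
      (hd_cos (P*s) s w)).add (hd_cos (Q*d) d w)
    exact H.congr_deriv (by ring)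
  have h2 := deriv_zero_of_zero hder1 h1
  -- level 2 -> 3
  have hder2 : ∀ w : ℝ, HasDerivAt
      (fun x => (-(2*A*d) - Q*d^2) * Real.sin (d*x) + (-(A*d^2)) * x * Real.cos (d*x)
        + (2*A*s - P*s^2) * Real.sin (s*x) + (A*s^2) * x * Real.cos (s*x))
      ((-(3*A*d^2) - Q*d^3) * Real.cos (d*w) + (A*d^3) * w * Real.sin (d*w)
        + (3*A*s^2 - P*s^3) * Real.cos (s*w) + (-(A*s^3)) * w * Real.sin (s*w)) w := by
    intro w
    have H := (((hd_sin (-(2*A*d) - Q*d^2) d w).add (hd_wcos (-(A*d^2)) d w)).add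
      (hd_sin (2*A*s - P*s^2) s w)).add (hd_wcos (A*s^2) s w)
    exact H.congr_deriv (by ring)
  have h3 := deriv_zero_of_zero hder2 h2
  -- level 3 -> 4
  have hder3 : ∀ w : ℝ, HasDerivAt
      (fun x => (-(3*A*d^2) - Q*d^3) * Real.cos (d*x) + (A*d^3) * x * Real.sin (d*x)
        + (3*A*s^2 - P*s^3) * Real.cos (s*x) + (-(A*s^3)) * x * Real.sin (s*x))
      ((4*A*d^3 + Q*d^4) * Real.sin (d*w) + (A*d^4) * w * Real.cos (d*w)
        + (P*s^4 - 4*A*s^3) * Real.sin (s*w) + (-(A*s^4)) * w * Real.cos (s*w)) w := by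
    intro w
    have H := (((hd_cos (-(3*A*d^2) - Q*d^3) d w).add (hd_wsin (A*d^3) d w)).add
      (hd_cos (3*A*s^2 - P*s^3) s w)).add (hd_wsin (-(A*s^3)) s w)
    exact H.congr_deriv (by ring)
  have h4 := deriv_zero_of_zero hder3 h3
  -- level 4 -> 5
  have hder4 : ∀ w : ℝ, HasDerivAt
      (fun x => (4*A*d^3 + Q*d^4) * Real.sin (d*x) + (A*d^4) * x * Real.cos (d*x)
        + (P*s^4 - 4*A*s^3) * Real.sin (s*x) + (-(A*s^4)) * x * Real.cos (s*x))
      ((5*A*d^4 + Q*d^5) * Real.cos (d*w) + (-(A*d^5)) * w * Real.sin (d*w)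
        + (P*s^5 - 5*A*s^4) * Real.cos (s*w) + (A*s^5) * w * Real.sin (s*w)) w := by
    intro w
    have H := (((hd_sin (4*A*d^3 + Q*d^4) d w).add (hd_wcos (A*d^4) d w)).add
      (hd_sin (P*s^4 - 4*A*s^3) s w)).add (hd_wcos (-(A*s^4)) s w)
    exact H.congr_deriv (by ring)
  have h5 := deriv_zero_of_zero hder4 h4
  -- extract equations at 0
  have E1 : P*s + Q*d = 0 := by
    have hh := h1 0
    simp only [mul_zero, zero_mul, Real.cos_zero, Real.sin_zero, mul_one] at hh
    linarith
  have E2 : -(3*A*d^2) - Q*d^3 + (3*A*s^2 - P*s^3) = 0 := by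
    have hh := h3 0
    simp only [mul_zero, zero_mul, Real.cos_zero, Real.sin_zero, mul_one] at hh
    linarith
  have E3 : 5*A*d^4 + Q*d^5 + (P*s^5 - 5*A*s^4) = 0 := by
    have hh := h5 0
    simp only [mul_zero, zero_mul, Real.cos_zero, Real.sin_zero, mul_one] at hh
    linarith
  -- algebra
  have key1 : 3*A*(s^2 - d^2) = -(Q*d)*(s^2 - d^2) := by
    linear_combination E2 + s^2 * E1
  have h3A : 3*A = -(Q*d) := mul_right_cancel₀ (ne_of_gt hsd) key1
  have hpos2 : (s^2 - d^2) * (s^2 + d^2) ≠ 0 := by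
    have hp : 0 < s^2 + d^2 := by positivity
    exact ne_of_gt (mul_pos hsd hp)
  have key2 : 5*A*((s^2 - d^2)*(s^2 + d^2)) = -(Q*d)*((s^2 - d^2)*(s^2 + d^2)) := by
    linear_combination (-1 : ℝ) * E3 + s^4 * E1
  have h5A : 5*A = -(Q*d) := by
    have := mul_right_cancel₀ hpos2 (by linear_combination key2 :
      (5*A) * ((s^2 - d^2)*(s^2 + d^2)) = (-(Q*d)) * ((s^2 - d^2)*(s^2 + d^2)))
    exact this
  have hA : A = 0 := by linarith
  have hQ : Q = 0 := by
    have hQd : Q * d = 0 := by linarith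
    rcases mul_eq_zero.mp hQd with h | h
    · exact h
    · exact absurd h hd
  have hP : P = 0 := by
    have hPs : P * s = 0 := by
      rw [hQ] at E1; linarith
    rcases mul_eq_zero.mp hPs with h | h
    · exact h
    · exact absurd h (ne_of_gt hs)
  exact ⟨hA, hP, hQ⟩

theorem distinct_length_lower_triangular_case (ℓ₁ ℓ₂ b₁ b₂ q₁ q₂ : ℝ)
    (h₁ : ℓ₁ > 0) (h₂ : ℓ₂ > 0) (hne : ℓ₁ ≠ ℓ₂) (hb₁ : b₁ > 0) (hb₂ : b₂ > 0)
    (h : ∀ w : ℝ, w > 0 →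
      (b₂ ^ 2 - b₁ ^ 2) * Real.sin (ℓ₁ * w) * Real.sin (ℓ₂ * w)
        + (1 / w) * (b₁ ^ 2 * q₂ * Real.sin (ℓ₁ * w) * Real.cos (ℓ₂ * w)
          - b₂ ^ 2 * q₁ * Real.cos (ℓ₁ * w) * Real.sin (ℓ₂ * w)) = 0) :
    b₁ = b₂ ∧ q₁ = 0 ∧ q₂ = 0 := by
  have hs : 0 < ℓ₁ + ℓ₂ := by linarith
  have hdne : ℓ₁ - ℓ₂ ≠ 0 := sub_ne_zero.mpr hne
  have hsd : 0 < (ℓ₁ + ℓ₂)^2 - (ℓ₁ - ℓ₂)^2 := by nlinarith [mul_pos h₁ h₂]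
  -- identity for positive x
  have key : ∀ x : ℝ, 0 < x →
      (b₂^2 - b₁^2) * x * Real.cos ((ℓ₁ - ℓ₂) * x) - (b₂^2 - b₁^2) * x * Real.cos ((ℓ₁ + ℓ₂) * x)
        + ((b₁^2*q₂ - b₂^2*q₁) * Real.sin ((ℓ₁ + ℓ₂) * x)
          + (b₁^2*q₂ + b₂^2*q₁) * Real.sin ((ℓ₁ - ℓ₂) * x)) = 0 := by
    intro x hx
    have hx0 : x ≠ 0 := ne_of_gt hx
    have hh := h x hx
    have h2 : x * ((b₂ ^ 2 - b₁ ^ 2) * Real.sin (ℓ₁ * x) * Real.sin (ℓ₂ * x)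
        + (1 / x) * (b₁ ^ 2 * q₂ * Real.sin (ℓ₁ * x) * Real.cos (ℓ₂ * x)
          - b₂ ^ 2 * q₁ * Real.cos (ℓ₁ * x) * Real.sin (ℓ₂ * x))) = 0 := by
      rw [hh, mul_zero]
    have h3 : x * (1/x) = 1 := by field_simp
    have hm : (b₂^2 - b₁^2) * x * (Real.sin (ℓ₁*x) * Real.sin (ℓ₂*x))
        + (b₁^2*q₂ * Real.sin (ℓ₁*x) * Real.cos (ℓ₂*x)
          - b₂^2*q₁ * Real.cos (ℓ₁*x) * Real.sin (ℓ₂*x)) = 0 := by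
      linear_combination h2 - (b₁^2*q₂ * Real.sin (ℓ₁*x) * Real.cos (ℓ₂*x)
        - b₂^2*q₁ * Real.cos (ℓ₁*x) * Real.sin (ℓ₂*x)) * h3
    have e1 : (ℓ₁ - ℓ₂) * x = ℓ₁*x - ℓ₂*x := by ring
    have e2 : (ℓ₁ + ℓ₂) * x = ℓ₁*x + ℓ₂*x := by ring
    rw [e1, e2, Real.cos_sub, Real.cos_add, Real.sin_add, Real.sin_sub]
    linear_combination 2 * hm
  -- extend to all reals
  have hG : ∀ x : ℝ,
      (b₂^2 - b₁^2) * x * Real.cos ((ℓ₁ - ℓ₂) * x) - (b₂^2 - b₁^2) * x * Real.cos ((ℓ₁ + ℓ₂) * x)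
        + ((b₁^2*q₂ - b₂^2*q₁) * Real.sin ((ℓ₁ + ℓ₂) * x)
          + (b₁^2*q₂ + b₂^2*q₁) * Real.sin ((ℓ₁ - ℓ₂) * x)) = 0 := by
    intro x
    rcases lt_trichotomy x 0 with hx | rfl | hx
    · have hpos := key (-x) (by linarith)
      simp only [mul_neg, Real.cos_neg, Real.sin_neg] at hpos
      linear_combination (-1 : ℝ) * hpos
    · simp
    · exact key x hx
  obtain ⟨hA, hP, hQ⟩ := cascade (b₂^2 - b₁^2) (b₁^2*q₂ - b₂^2*q₁) (b₁^2*q₂ + b₂^2*q₁)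
    (ℓ₁ + ℓ₂) (ℓ₁ - ℓ₂) hs hdne hsd hG
  have hb : b₁ = b₂ := by
    have hfac : (b₁ - b₂) * (b₁ + b₂) = 0 := by linear_combination (-1 : ℝ) * hA
    rcases mul_eq_zero.mp hfac with hf | hf
    · linarith [sub_eq_zero.mp hf]
    · linarith
  have hb₁2 : b₁^2 ≠ 0 := by positivity
  have hb₂2 : b₂^2 ≠ 0 := by positivity
  have hq₂ : q₂ = 0 := by
    have : b₁^2 * q₂ = 0 := by linarith
    rcases mul_eq_zero.mp this with hf | hf
    · exact absurd hf hb₁2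
    · exact hf
  have hq₁ : q₁ = 0 := by
    have : b₂^2 * q₁ = 0 := by linarith
    rcases mul_eq_zero.mp this with hf | hf
    · exact absurd hf hb₂2
    · exact hf
  exact ⟨hb, hq₁, hq₂⟩
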